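/- Let $\Phi: M_d \to M_d$ be a unital quantum channel and let $X$ satisfy $\Phi(X) = \lambda X$ with $|\lambda| = 1$. Then $\Phi(XX^*) = XX^*$, i.e., $XX^*$ is a fixed point of $\Phi$. -/

import Mathlib

open Matrix

lemma aux_trace_self_mul_conjTranspose {d : ℕ} (A : Matrix (Fin d) (Fin d) ℂ) :
    (A * Aᴴ).trace = ((∑ j, ∑ k, Complex.normSq (A j k) : ℝ) : ℂ) := by
  simp [Matrix.trace, Matrix.diag, Matrix.mul_apply, Matrix.conjTranspose_apply,
    Complex.mul_conj]

lemma aux_eq_zero_of_trace {d : ℕ} (A : Matrix (Fin d) (Fin d) ℂ)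
    (h : ∑ j, ∑ k, Complex.normSq (A j k) = 0) : A = 0 := by
  have hk : ∀ j ∈ Finset.univ, ∑ k, Complex.normSq (A j k) = 0 := by
    intro j _
    have := (Finset.sum_eq_zero_iff_of_nonneg (fun j _ =>
      Finset.sum_nonneg fun k _ => Complex.normSq_nonneg _)).mp h
    exact this j (Finset.mem_univ j)
  ext j k
  have := (Finset.sum_eq_zero_iff_of_nonneg (fun k _ =>
    Complex.normSq_nonneg (A j k))).mp (hk j (Finset.mem_univ j)) k (Finset.mem_univ k)
  simpa using Complex.normSq_eq_zero.mp this

/-- If `Φ` is a unital quantum channel and `Φ(X) = λ X` with `|λ| = 1`,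
then `X X*` is a fixed point of `Φ`. -/
theorem peripheral_eigenvector_XXstar_fixed (d n : ℕ)
    (K : Fin n → Matrix (Fin d) (Fin d) ℂ)
    (Φ : Matrix (Fin d) (Fin d) ℂ → Matrix (Fin d) (Fin d) ℂ)
    (hΦ : ∀ Y, Φ Y = ∑ i, K i * Y * (K i)ᴴ)
    (htp : ∑ i, (K i)ᴴ * K i = 1)
    (hunital : ∑ i, K i * (K i)ᴴ = 1)
    (X : Matrix (Fin d) (Fin d) ℂ) (lam : ℂ) (hlam : ‖lam‖ = 1)
    (heig : Φ X = lam • X) :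
    Φ (X * Xᴴ) = X * Xᴴ := by
  classical
  set A : Fin n → Matrix (Fin d) (Fin d) ℂ := fun i => K i * X - lam • (X * K i) with hA
  have h1 : lam * star lam = 1 := by
    rw [Complex.star_def, Complex.mul_conj]
    norm_cast
    simp [Complex.normSq_eq_norm_sq, hlam]
  have heigK : ∑ i, K i * X * (K i)ᴴ = lam • X := by rw [← hΦ]; exact heig
  have heigK' : ∑ i, K i * Xᴴ * (K i)ᴴ = star lam • Xᴴ := by
    have := congrArg conjTranspose heigK
    simpa [conjTranspose_sum, conjTranspose_mul, conjTranspose_smul, mul_assoc] using this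
  have expand : ∀ i, A i * (A i)ᴴ =
      K i * (X * Xᴴ) * (K i)ᴴ
      - star lam • (K i * X * (K i)ᴴ * Xᴴ)
      - lam • (X * (K i * Xᴴ * (K i)ᴴ))
      + (lam * star lam) • (X * (K i * (K i)ᴴ) * Xᴴ) := by
    intro i
    simp only [hA, conjTranspose_sub, conjTranspose_smul, conjTranspose_mul, sub_mul, mul_sub,
      smul_mul_assoc, mul_smul_comm, smul_smul, smul_sub, mul_assoc]
    module
  have hsum : ∑ i, A i * (A i)ᴴ = Φ (X * Xᴴ) - X * Xᴴ := by
    rw [hΦ]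
    simp only [expand]
    rw [Finset.sum_add_distrib, Finset.sum_sub_distrib, Finset.sum_sub_distrib]
    simp only [← Finset.smul_sum, ← Finset.sum_mul, ← Finset.mul_sum]
    rw [heigK, heigK', hunital]
    simp only [smul_mul_assoc, mul_smul_comm, smul_smul, mul_one,
      mul_comm (star lam) lam, h1, one_smul]
    abel
  -- trace of Φ(XXᴴ) equals trace of XXᴴ
  have htr : (Φ (X * Xᴴ)).trace = (X * Xᴴ).trace := by
    rw [hΦ, Matrix.trace_sum]
    have : ∀ i ∈ Finset.univ, (K i * (X * Xᴴ) * (K i)ᴴ).trace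
        = ((K i)ᴴ * K i * (X * Xᴴ)).trace := by
      intro i _
      rw [Matrix.trace_mul_cycle]
    rw [Finset.sum_congr rfl this, ← Matrix.trace_sum, ← Finset.sum_mul, htp, one_mul]
  have htr0 : (∑ i, A i * (A i)ᴴ).trace = 0 := by
    rw [hsum, Matrix.trace_sub, htr, sub_self]
  rw [Matrix.trace_sum] at htr0
  simp only [aux_trace_self_mul_conjTranspose] at htr0
  have hreal : ∑ i, ∑ j, ∑ k, Complex.normSq (A i j k) = 0 := by
    exact_mod_cast htr0
  have hAzero : ∀ i, A i = 0 := by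
    intro i
    apply aux_eq_zero_of_trace
    have := (Finset.sum_eq_zero_iff_of_nonneg (fun i _ =>
      Finset.sum_nonneg fun j _ => Finset.sum_nonneg fun k _ =>
        Complex.normSq_nonneg _)).mp hreal
    exact this i (Finset.mem_univ i)
  have : Φ (X * Xᴴ) - X * Xᴴ = 0 := by
    rw [← hsum]
    simp [hAzero]
  exact sub_eq_zero.mp this
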